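/- Let K = ℚ(m) be the field of rational functions in one variable m over ℚ, and let W be the Weierstrass curve over the polynomial ring K[t] given by y² + (m·t − 27m + 18)xy + 16t·y = x³ + t·x² (i.e. a₁ = m·t − 27m + 18, a₂ = t, a₃ = 16t, a₄ = 0, a₆ = 0). Then there exists a nonzero constant c ∈ K such that the discriminant of W, as a polynomial in t, satisfies Δ = c · t³ · (t − 27)² · (m⁴t² − 2m²(27m² − 28m − 4)t + (27m − 2)(3m − 2)³), and moreover (t − 27) divides the invariant c₄ of W in K[t]. -/

import Mathlib

open Polynomial

/-- The family of rational elliptic surfaces with configuration [1,1,3,5,II]: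
`y² + (mt − 27m + 18)xy + 16t·y = x³ + t·x²` over `ℚ(m)[t]`.  Its discriminant is, up to a
nonzero constant, `t³ · (t − 27)²` times the displayed quadratic in `t`, and `t − 27`
divides `c₄`. -/
theorem stmt_2 :
    let K := RatFunc ℚ
    let m : Polynomial K := Polynomial.C RatFunc.X
    let t : Polynomial K := Polynomial.X
    let W : WeierstrassCurve (Polynomial K) :=
      { a₁ := m * t - 27 * m + 18
        a₂ := t
        a₃ := 16 * t
        a₄ := 0
        a₆ := 0 }
    (∃ c : K, c ≠ 0 ∧
      W.Δ = Polynomial.C c * t ^ 3 * (t - 27) ^ 2 *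
        (m ^ 4 * t ^ 2 - 2 * m ^ 2 * (27 * m ^ 2 - 28 * m - 4) * t +
          (27 * m - 2) * (3 * m - 2) ^ 3)) ∧
    (t - 27) ∣ W.c₄ := by
  intro K m t W
  constructor
  · have h256 : (-256 : K) ≠ 0 := by
      have h : RatFunc.C (-256 : ℚ) ≠ 0 := by rw [_root_.map_ne_zero]; norm_num
      simpa [map_neg, map_ofNat] using h
    refine ⟨-256, h256, ?_⟩
    show W.Δ = _
    simp only [WeierstrassCurve.Δ, WeierstrassCurve.b₂, WeierstrassCurve.b₄,
      WeierstrassCurve.b₆, WeierstrassCurve.b₈, W, m, t, map_neg, map_ofNat]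
    have hC : (Polynomial.C (-256 : RatFunc ℚ)) = -256 := by
      rw [map_neg, neg_inj]; exact_mod_cast map_natCast Polynomial.C 256
    rw [hC]
    ring
  · refine ⟨m ^ 4 * t ^ 3 + (-81 * m ^ 4 + 72 * m ^ 3 + 8 * m ^ 2) * t ^ 2 +
      (2187 * m ^ 4 - 3888 * m ^ 3 + 1728 * m ^ 2 - 96 * m + 16) * t +
      (-19683 * m ^ 4 + 52488 * m ^ 3 - 52488 * m ^ 2 + 23328 * m - 3888), ?_⟩
    show W.c₄ = _
    simp only [WeierstrassCurve.c₄, WeierstrassCurve.b₂, WeierstrassCurve.b₄, W, m, t]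
    ring
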